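/- Let R be a commutative ring and q, v, v' ∈ R. For each integer m ≥ 1 let t_F(m) = Σ over all compositions (ℓ₁,…,ℓ_k) of m into positive integer parts of ∏_{j=1}^{k} v^{ℓ_j−1}·(q + ℓ_j·v') ∈ R. Then, in the formal power series ring R[[z]], (1 − (q+2v+v')·z + v·(q+v)·z²) · Σ_{m≥1} t_F(m)·z^m = (q+v')·z − q·v·z². -/

import Mathlib

/-- The partition function of the one-dimensional `m`-site polymer gas in which
each site is covered by exactly one polymer and a polymer of length `ℓ` has
fugacity `v^(ℓ-1) (q + ℓ v')`: the sum over all compositions of `m` into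
positive parts of the product of the fugacities of the parts.  This is the
large-`q` dominant diagonal entry of the square-lattice transfer matrix of
width `m` with free boundary conditions. -/
noncomputable def tF {R : Type*} [CommRing R] (q v v' : R) (m : ℕ) : R :=
  ∑ c : Composition m, (c.blocks.map (fun (ℓ : ℕ) => v ^ (ℓ - 1) * (q + (ℓ : R) * v'))).prod

lemma comp_zero_unique : Subsingleton (Composition 0) := by
  constructor
  intro a b
  have ha : a.blocks = [] := by
    by_contra h
    have := a.blocks_sum
    cases hb : a.blocks with
    | nil => exact h hb
    | cons x l =>
      have hx : 0 < x := a.blocks_pos (by rw [hb]; exact List.mem_cons_self)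
      have : x + l.sum = 0 := by rw [← List.sum_cons, ← hb, a.blocks_sum]
      omega
  have hb : b.blocks = [] := by
    by_contra h
    cases hb : b.blocks with
    | nil => exact h hb
    | cons x l =>
      have hx : 0 < x := b.blocks_pos (by rw [hb]; exact List.mem_cons_self)
      have : x + l.sum = 0 := by rw [← List.sum_cons, ← hb, b.blocks_sum]
      omega
  exact Composition.ext (ha.trans hb.symm)

lemma tF_zero {R : Type*} [CommRing R] (q v v' : R) : tF q v v' 0 = 1 := by
  have := comp_zero_unique
  unfold tF
  rw [Finset.sum_eq_single_of_mem (Composition.ones 0) (Finset.mem_univ _)]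
  · simp [Composition.ones]
  · intro b _ hb
    exact absurd (Subsingleton.elim b (Composition.ones 0)) hb


lemma comp_blocks_ne_nil {n : ℕ} (c : Composition (n + 1)) : c.blocks ≠ [] := by
  intro h
  have := c.blocks_sum
  rw [h] at this
  simp at this

lemma comp_head_pos {n : ℕ} (c : Composition (n + 1)) :
    0 < c.blocks.head (comp_blocks_ne_nil c) :=
  c.blocks_pos (List.head_mem _)

lemma comp_head_tail_sum {n : ℕ} (c : Composition (n + 1)) :
    c.blocks.head (comp_blocks_ne_nil c) + c.blocks.tail.sum = n + 1 := by
  rw [← List.sum_cons, List.cons_head_tail]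
  exact c.blocks_sum

def splitComp (n : ℕ) (c : Composition (n + 1)) :
    Σ ℓ : ℕ, Composition (n - ℓ) :=
  ⟨c.blocks.head (comp_blocks_ne_nil c) - 1,
   ⟨c.blocks.tail,
    fun hi => c.blocks_pos (List.mem_of_mem_tail hi),
    by have h1 := comp_head_tail_sum c
       have h2 := comp_head_pos c
       omega⟩⟩

def consComp (n ℓ : ℕ) (h : ℓ ≤ n) (d : Composition (n - ℓ)) : Composition (n + 1) :=
  ⟨(ℓ + 1) :: d.blocks,
   fun hi => by
     rcases List.mem_cons.1 hi with h' | h'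
     · omega
     · exact d.blocks_pos h',
   by have := d.blocks_sum; simp only [List.sum_cons, this]; omega⟩

lemma splitComp_fst_le (n : ℕ) (c : Composition (n + 1)) : (splitComp n c).1 ≤ n := by
  have h1 := comp_head_tail_sum c
  have h2 := comp_head_pos c
  show c.blocks.head _ - 1 ≤ n
  omega

lemma cons_split (n : ℕ) (c : Composition (n + 1)) :
    consComp n (splitComp n c).1 (splitComp_fst_le n c) (splitComp n c).2 = c := by
  apply Composition.ext
  show (((splitComp n c).1 + 1) :: c.blocks.tail) = c.blocks
  have h2 := comp_head_pos c
  have : (splitComp n c).1 + 1 = c.blocks.head (comp_blocks_ne_nil c) := by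
    show c.blocks.head _ - 1 + 1 = _
    omega
  rw [this, List.cons_head_tail]

lemma split_cons (n ℓ : ℕ) (h : ℓ ≤ n) (d : Composition (n - ℓ)) :
    splitComp n (consComp n ℓ h d) = ⟨ℓ, d⟩ := by
  unfold splitComp consComp
  simp only [List.head_cons, List.tail_cons, Nat.add_sub_cancel]
  exact congrArg (Sigma.mk ℓ) (Composition.ext rfl)

lemma tF_succ {R : Type*} [CommRing R] (q v v' : R) (n : ℕ) :
    tF q v v' (n + 1)
      = ∑ ℓ ∈ Finset.range (n + 1),
          v ^ ℓ * (q + ((ℓ + 1 : ℕ) : R) * v') * tF q v v' (n - ℓ) := by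
  classical
  unfold tF
  rw [Finset.sum_congr rfl (fun ℓ _ => Finset.mul_sum _ _ _)]
  have hsig := Finset.sum_sigma (Finset.range (n + 1))
      (fun ℓ => (Finset.univ : Finset (Composition (n - ℓ))))
      (fun p => v ^ p.1 * (q + ((p.1 + 1 : ℕ) : R) * v')
        * (List.map (fun b : ℕ => v ^ (b - 1) * (q + (b : R) * v')) p.2.blocks).prod)
  rw [← hsig]
  refine Finset.sum_bij' (fun c _ => splitComp n c)
    (fun p hp => consComp n p.1 (by
      have := (Finset.mem_sigma.1 hp).1
      exact Nat.lt_succ_iff.1 (Finset.mem_range.1 this)) p.2)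
    (fun c _ => ?_) (fun p hp => Finset.mem_univ _)
    (fun c _ => cons_split n c) (fun p hp => ?_) (fun c _ => ?_)
  · rw [Finset.mem_sigma]
    exact ⟨Finset.mem_range.2 (Nat.lt_succ_of_le (splitComp_fst_le n c)), Finset.mem_univ _⟩
  · exact split_cons n p.1 _ p.2
  · -- value equality
    have hhead : c.blocks = c.blocks.head (comp_blocks_ne_nil c) :: c.blocks.tail :=
      (List.cons_head_tail _).symm
    rw [hhead]
    simp only [List.map_cons, List.prod_cons]
    have h2 := comp_head_pos c
    have h1 : (splitComp n c).1 + 1 = c.blocks.head (comp_blocks_ne_nil c) := by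
      show c.blocks.head _ - 1 + 1 = _
      omega
    show _ = v ^ (splitComp n c).1 * (q + (((splitComp n c).1 + 1 : ℕ) : R) * v')
        * (List.map _ (splitComp n c).2.blocks).prod
    rw [h1]
    rfl

noncomputable def Fs {R : Type*} [CommRing R] (q v v' : R) : PowerSeries R :=
  PowerSeries.mk fun ℓ => if ℓ = 0 then 0 else v ^ (ℓ - 1) * (q + (ℓ : R) * v')

lemma one_sub_F_mul_B {R : Type*} [CommRing R] (q v v' : R) :
    (1 - Fs q v v') * PowerSeries.mk (tF q v v') = 1 := by
  ext n
  rw [PowerSeries.coeff_mul, Finset.Nat.sum_antidiagonal_eq_sum_range_succ_mk]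
  cases n with
  | zero => simp [Fs, tF_zero]
  | succ n =>
    rw [Finset.sum_range_succ']
    have h1 : ∀ i : ℕ, (PowerSeries.coeff (i + 1)) (1 - Fs q v v')
        = -(v ^ i * (q + ((i + 1 : ℕ) : R) * v')) := by
      intro i
      simp [Fs, PowerSeries.coeff_one]
    have h0 : (PowerSeries.coeff 0) (1 - Fs q v v') = 1 := by
      simp [Fs]
    simp only [h1, h0, PowerSeries.coeff_mk, one_mul, Nat.sub_zero]
    simp only [Nat.succ_sub_succ, neg_mul, Finset.sum_neg_distrib]
    rw [← tF_succ q v v' n]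
    simp [PowerSeries.coeff_one]

lemma sq_mul_F {R : Type*} [CommRing R] (q v v' : R) :
    (1 - PowerSeries.C v * PowerSeries.X) ^ 2 * Fs q v v'
      = PowerSeries.C (q + v') * PowerSeries.X
        - PowerSeries.C (q * v) * PowerSeries.X ^ 2 := by
  have hexp : (1 - PowerSeries.C v * PowerSeries.X) ^ 2
      = 1 - PowerSeries.C (2 * v) * PowerSeries.X
        + PowerSeries.C (v * v) * PowerSeries.X ^ 2 := by
    simp only [map_mul, map_ofNat]
    ring
  rw [hexp]
  ext n
  have cf : ∀ k : ℕ, (PowerSeries.coeff k) (Fs q v v')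
      = if k = 0 then 0 else v ^ (k - 1) * (q + (k : R) * v') := fun k =>
    PowerSeries.coeff_mk _ _
  rw [add_mul, sub_mul, one_mul, mul_assoc, mul_assoc]
  simp only [map_add, map_sub, PowerSeries.coeff_C_mul]
  match n with
  | 0 => simp [cf, PowerSeries.coeff_one]
  | 1 =>
    rw [PowerSeries.coeff_succ_X_mul]
    have : (PowerSeries.coeff 1) (PowerSeries.X ^ 2 * Fs q v v') = 0 := by
      rw [PowerSeries.coeff_X_pow_mul' (Fs q v v') 2 1]
      simp
    rw [this]
    simp [cf, PowerSeries.coeff_one, PowerSeries.coeff_X, PowerSeries.coeff_X_pow]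
  | 2 =>
    rw [PowerSeries.coeff_succ_X_mul]
    have h2 : (PowerSeries.coeff 2) (PowerSeries.X ^ 2 * Fs q v v') = 0 := by
      have := PowerSeries.coeff_X_pow_mul (Fs q v v') 2 0
      exact this.trans (by simpa using cf 0)
    rw [h2]
    simp [cf, PowerSeries.coeff_one, PowerSeries.coeff_X, PowerSeries.coeff_X_pow]
    push_cast
    ring
  | (m + 3) =>
    rw [PowerSeries.coeff_succ_X_mul]
    have h2 : (PowerSeries.coeff (m + 3)) (PowerSeries.X ^ 2 * Fs q v v')
        = (PowerSeries.coeff (m + 1)) (Fs q v v') := by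
      have := PowerSeries.coeff_X_pow_mul (Fs q v v') 2 (m + 1)
      simpa [add_comm, add_assoc, add_left_comm] using this
    rw [h2]
    have hx2 : (PowerSeries.coeff (3 + m)) (PowerSeries.X ^ 2 : PowerSeries R) = 0 := by
      rw [PowerSeries.coeff_X_pow]
      simp only [ite_eq_right_iff]
      omega
    simp only [cf, PowerSeries.coeff_one, PowerSeries.coeff_X, hx2]
    norm_num [hx2]
    all_goals (try push_cast) <;> (try ring) <;> simp [hx2]

lemma A_eq {R : Type*} [CommRing R] (q v v' : R) :
    PowerSeries.mk (fun m => if m = 0 then 0 else tF q v v' m)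
      = PowerSeries.mk (tF q v v') - 1 := by
  ext n
  cases n with
  | zero => simp [tF_zero, PowerSeries.coeff_one]
  | succ n => simp [PowerSeries.coeff_one]


/-- The generating function `Φ_F(z) = ∑_{m ≥ 1} t_F(m) z^m` satisfies
`(1 - (q+2v+v') z + v (q+v) z²) Φ_F(z) = (q+v') z - q v z²` in `R⟦z⟧`. -/
theorem tF_generating_function {R : Type*} [CommRing R] (q v v' : R) :
    (1 - PowerSeries.C (q + 2 * v + v') * PowerSeries.X
        + PowerSeries.C (v * (q + v)) * PowerSeries.X ^ 2)
      * PowerSeries.mk (fun m => if m = 0 then 0 else tF q v v' m)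
    = PowerSeries.C (q + v') * PowerSeries.X
        - PowerSeries.C (q * v) * PowerSeries.X ^ 2 := by
  have hD : (1 - PowerSeries.C (q + 2 * v + v') * PowerSeries.X
        + PowerSeries.C (v * (q + v)) * PowerSeries.X ^ 2)
      = (1 - PowerSeries.C v * PowerSeries.X) ^ 2 * (1 - Fs q v v') := by
    have := sq_mul_F q v v'
    calc 1 - PowerSeries.C (q + 2 * v + v') * PowerSeries.X
        + PowerSeries.C (v * (q + v)) * PowerSeries.X ^ 2
        = (1 - PowerSeries.C v * PowerSeries.X) ^ 2
          - ((1 - PowerSeries.C v * PowerSeries.X) ^ 2 * Fs q v v') := by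
          rw [this]
          simp only [map_add, map_mul, map_ofNat]
          ring
      _ = _ := by ring
  rw [hD, A_eq]
  calc (1 - PowerSeries.C v * PowerSeries.X) ^ 2 * (1 - Fs q v v')
        * (PowerSeries.mk (tF q v v') - 1)
      = (1 - PowerSeries.C v * PowerSeries.X) ^ 2
        * ((1 - Fs q v v') * PowerSeries.mk (tF q v v') - (1 - Fs q v v')) := by ring
    _ = (1 - PowerSeries.C v * PowerSeries.X) ^ 2 * (1 - (1 - Fs q v v')) := by
        rw [one_sub_F_mul_B]
    _ = (1 - PowerSeries.C v * PowerSeries.X) ^ 2 * Fs q v v' := by ring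
    _ = _ := sq_mul_F q v v'
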